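/- For each n ≥ 2 there exist polynomials P₀, P₁, …, P_{n+1} ∈ ℤ[X] with deg P_k ≤ k for every k, such that the following identity holds: for all a, b, c, d ∈ ℂ with ad − bc = 1 and a + b = c + d ≠ 0 (so that f(z) = (a z^n + b)/(c z^n + d) has a fixed point at z = 1), setting μ = 1/(c+d)² (so the multiplier of f at 1 is λ = n μ), X = bc and Y = a^{n+1} b^{n−1} + c^{n−1} d^{n+1}, one has μ·Y = Σ_{k=0}^{n+1} (−μ)^{n+1−k} P_k(X), i.e. μY = P_{n+1}(X) − μ P_n(X) + μ² P_{n−1}(X) − ⋯ + (−μ)^n P₁(X) + (−μ)^{n+1} P₀(X). (Theorem 2.3; in particular, for a bicritical map with a fixed point of multiplier λ, the product λ^n Y is a polynomial function of X and λ with integer coefficients, as in Lemma 2.1.) -/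

import Mathlib

open Polynomial Finset

noncomputable def qq : ℕ → Polynomial (Polynomial ℤ)
  | 0 => 2
  | 1 => 1 + X
  | (m+2) => (1 + X) * qq (m+1) - C (Polynomial.X + 1) * X * qq m

lemma qq_natDegree_le (m : ℕ) : (qq m).natDegree ≤ m := by
  induction m using Nat.twoStepInduction with
  | zero => simp [qq]
  | one =>
    simp only [qq]
    exact le_trans (natDegree_add_le _ _) (by simp)
  | more m ih1 ih2 =>
    simp only [qq]
    refine le_trans (natDegree_sub_le _ _) (max_le ?_ ?_)
    · refine le_trans (natDegree_mul_le) ?_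
      have h1 : (1 + (X : Polynomial (Polynomial ℤ))).natDegree ≤ 1 :=
        le_trans (natDegree_add_le _ _) (by simp)
      omega
    · refine le_trans (natDegree_mul_le) ?_
      have h1 : (C (Polynomial.X + 1) * (X : Polynomial (Polynomial ℤ))).natDegree ≤ 1 := by
        refine le_trans natDegree_mul_le ?_
        simp
      omega


lemma qq_coeff_eq_zero {m t : ℕ} (h : m < t) : (qq m).coeff t = 0 :=
  coeff_eq_zero_of_natDegree_lt (lt_of_le_of_lt (qq_natDegree_le m) h)


lemma qq_coeff_deg (m : ℕ) : ∀ t, ((qq m).coeff t).natDegree ≤ m - t := by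
  induction m using Nat.twoStepInduction with
  | zero =>
    intro t
    rcases t with _ | t <;> simp [qq]
  | one =>
    intro t
    rcases t with _ | t
    · simp [qq]
    · rcases t with _ | t <;> simp [qq, coeff_one, coeff_X]
  | more m ih1 ih2 =>
    intro t
    have hexp : qq (m+2) = qq (m+1) + X * qq (m+1) - C (Polynomial.X + 1) * (X * qq m) := by
      simp only [qq]; ring
    rcases t with _ | r
    · rw [hexp]
      simp only [coeff_sub, coeff_add, coeff_C_mul]
      have h0 : ((X : Polynomial (Polynomial ℤ)) * qq (m+1)).coeff 0 = 0 := by simp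
      have h1 : ((X : Polynomial (Polynomial ℤ)) * qq m).coeff 0 = 0 := by simp
      rw [h0, h1]
      simpa using le_trans (ih2 0) (by omega)
    · rw [hexp]
      simp only [coeff_sub, coeff_add, coeff_C_mul, coeff_X_mul]
      refine le_trans (natDegree_sub_le _ _) (max_le (le_trans (natDegree_add_le _ _) (max_le ?_ ?_)) ?_)
      · exact le_trans (ih2 (r+1)) (by omega)
      · exact le_trans (ih2 r) (by omega)
      · rcases le_or_gt r m with hr | hr
        · refine le_trans natDegree_mul_le ?_
          have : (Polynomial.X + 1 : Polynomial ℤ).natDegree ≤ 1 :=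
            le_trans (natDegree_add_le _ _) (by simp)
          have := ih1 r
          omega
        · rw [qq_coeff_eq_zero hr, mul_zero]
          simp

lemma qq_eval (xv mv α δ : ℂ) (hs : α + δ = 1 + mv) (hp : α * δ = mv * (xv + 1)) (m : ℕ) :
    Polynomial.eval₂ (Polynomial.aeval xv : Polynomial ℤ →ₐ[ℤ] ℂ).toRingHom mv (qq m)
      = α ^ m + δ ^ m := by
  induction m using Nat.twoStepInduction with
  | zero => simp [qq]; norm_num
  | one => simp [qq, hs]
  | more m ih1 ih2 =>
    simp only [qq, eval₂_sub, eval₂_mul, eval₂_add, eval₂_one, eval₂_X, eval₂_C, ih1, ih2]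
    have h1 : (Polynomial.aeval xv : Polynomial ℤ →ₐ[ℤ] ℂ).toRingHom (Polynomial.X + 1) = xv + 1 := by
      simp
    rw [h1]
    rw [← hs]
    linear_combination (α^m + δ^m) * hp

noncomputable def GG (n : ℕ) : Polynomial (Polynomial ℤ) :=
  ∑ j ∈ Finset.range n,
    C (C ((-1)^(n-1-j) * ((n-1).choose j : ℤ)) * (Polynomial.X + 1)^j) * qq (n+1-j)

lemma GG_coeff_deg (n t : ℕ) : ((GG n).coeff t).natDegree ≤ n + 1 - t := by
  rw [GG, finset_sum_coeff]
  refine natDegree_sum_le_of_forall_le _ _ (fun j hj => ?_)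
  rw [coeff_C_mul]
  have hj' : j < n := mem_range.mp hj
  rcases le_or_gt t (n+1-j) with ht | ht
  · refine le_trans (natDegree_mul_le) ?_
    have h1 : (C ((-1)^(n-1-j) * ((n-1).choose j : ℤ)) * (Polynomial.X + 1)^j).natDegree ≤ j := by
      refine le_trans (natDegree_C_mul_le _ _) ?_
      refine le_trans (natDegree_pow_le) ?_
      have : (Polynomial.X + 1 : Polynomial ℤ).natDegree ≤ 1 :=
        le_trans (natDegree_add_le _ _) (by simp)
      nlinarith
    have h2 := qq_coeff_deg (n+1-j) t
    omega
  · rw [qq_coeff_eq_zero ht, mul_zero]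
    simp

lemma GG_natDegree_le (n : ℕ) : (GG n).natDegree ≤ n + 1 := by
  rw [natDegree_le_iff_coeff_eq_zero]
  intro N hN
  rw [GG, finset_sum_coeff]
  refine Finset.sum_eq_zero (fun j hj => ?_)
  rw [coeff_C_mul, qq_coeff_eq_zero (by omega), mul_zero]

noncomputable def PP (n k : ℕ) : Polynomial ℤ := (-1)^(n+1-k) * (GG n).coeff (n+1-k)

lemma PP_deg (n : ℕ) : ∀ k ≤ n + 1, (PP n k).natDegree ≤ k := by
  intro k hk
  rw [PP]
  have h1 : ((-1 : Polynomial ℤ)^(n+1-k)) = C ((-1)^(n+1-k)) := by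
    simp
  rw [h1]
  refine le_trans (natDegree_C_mul_le _ _) ?_
  have := GG_coeff_deg n (n+1-k)
  omega


/-- Theorem 2.3: there exist integer polynomials `P₀, …, P_{n+1}` with
`deg P_k ≤ k` such that for every normalized bicritical map
`f(z) = (a z^n + b)/(c z^n + d)` (`ad - bc = 1`) with a fixed point at `z = 1`
(`a + b = c + d ≠ 0`), setting `μ = 1/(c+d)²` (so the multiplier there is
`λ = nμ`), `X = bc` and `Y = a^{n+1} b^{n-1} + c^{n-1} d^{n+1}`, one has
`μ Y = Σ_{k=0}^{n+1} (-μ)^{n+1-k} P_k(X)`. -/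
theorem stmt9 (n : ℕ) (hn : 2 ≤ n) :
    ∃ P : ℕ → Polynomial ℤ,
      (∀ k ≤ n + 1, (P k).natDegree ≤ k) ∧
      ∀ a b c d : ℂ, a * d - b * c = 1 → a + b = c + d → c + d ≠ 0 →
        (1 / (c + d) ^ 2) *
            (a ^ (n + 1) * b ^ (n - 1) + c ^ (n - 1) * d ^ (n + 1)) =
          ∑ k ∈ Finset.range (n + 2),
            (-(1 / (c + d) ^ 2)) ^ (n + 1 - k) * Polynomial.aeval (b * c) (P k) := by
  obtain ⟨m, rfl⟩ : ∃ m, n = m + 2 := ⟨n - 2, by omega⟩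
  refine ⟨PP (m+2), PP_deg (m+2), ?_⟩
  intro a b c d h1 h2 h3
  set v : ℂ := 1 / (c + d) with hv_def
  set xv : ℂ := b * c with hxv_def
  have hmu : (1 : ℂ) / (c + d) ^ 2 = v ^ 2 := by rw [hv_def]; field_simp
  rw [hmu]
  simp only [show m + 2 - 1 = m + 1 from rfl, show m + 2 + 1 = m + 3 from rfl]
  have hv : v * (c + d) = 1 := by rw [hv_def]; field_simp
  have hac : (a - c) * (c + d) = 1 := by linear_combination h1 + c * h2
  have hacv : a - c = v := mul_right_cancel₀ h3 (hac.trans hv.symm)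
  have hcv : c = a - v := by linear_combination -hacv
  have hbv : b = d - v := by linear_combination -hacv + h2
  have he : a * d = xv + 1 := by rw [hxv_def]; linear_combination h1
  have hs : a * v + d * v = 1 + v ^ 2 := by
    have : (a + d) * (c + d) = 1 + (c + d)^2 := by linear_combination hac
    rw [hv_def]
    field_simp
    linear_combination this
  have hp : (a * v) * (d * v) = v ^ 2 * (xv + 1) := by linear_combination v ^ 2 * he
  -- RHS = eval₂ of GG
  have hrhs : ∑ k ∈ Finset.range (m + 2 + 2), (-(v ^ 2)) ^ (m + 2 + 1 - k) * Polynomial.aeval xv (PP (m+2) k)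
      = Polynomial.eval₂ (Polynomial.aeval xv : Polynomial ℤ →ₐ[ℤ] ℂ).toRingHom (v ^ 2) (GG (m+2)) := by
    rw [Polynomial.eval₂_eq_sum_range' _ (show (GG (m+2)).natDegree < m+4 from lt_of_le_of_lt (GG_natDegree_le (m+2)) (by omega)) (v^2)]
    rw [← Finset.sum_range_reflect (fun t => (Polynomial.aeval xv : Polynomial ℤ →ₐ[ℤ] ℂ).toRingHom ((GG (m+2)).coeff t) * (v^2)^t) (m+4)]
    refine Finset.sum_congr rfl (fun k hk => ?_)
    have hk' : k < m + 4 := mem_range.mp hk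
    have hidx : m + 4 - 1 - k = m + 3 - k := by omega
    rw [hidx]
    show (-(v ^ 2)) ^ (m + 3 - k) * Polynomial.aeval xv (PP (m+2) k) = _
    rw [PP]
    have : m + 2 + 1 - k = m + 3 - k := by omega
    rw [this]
    rw [map_mul, map_pow, map_neg, map_one]
    rw [← mul_assoc, ← mul_pow]
    norm_num
    ring
  rw [show m + 2 + 1 = m + 3 from rfl] at hrhs ⊢
  rw [hrhs]
  -- eval₂ of GG = explicit sum
  have hGG : Polynomial.eval₂ (Polynomial.aeval xv : Polynomial ℤ →ₐ[ℤ] ℂ).toRingHom (v ^ 2) (GG (m+2))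
      = ∑ j ∈ Finset.range (m+2),
          ((-1 : ℂ))^(m+1-j) * ((m+1).choose j : ℂ) * (xv+1)^j * ((a*v)^(m+3-j) + (d*v)^(m+3-j)) := by
    rw [GG, Polynomial.eval₂_finset_sum]
    refine Finset.sum_congr rfl (fun j hj => ?_)
    rw [Polynomial.eval₂_mul, Polynomial.eval₂_C]
    have hq := qq_eval xv (v^2) (a*v) (d*v) hs hp (m+2+1-j)
    have hidx : m + 2 + 1 - j = m + 3 - j := by omega
    rw [hidx] at hq ⊢
    rw [hq]
    have hidx2 : m + 2 - 1 - j = m + 1 - j := by omega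
    rw [hidx2]
    simp only [AlgHom.toRingHom_eq_coe, RingHom.coe_coe, map_mul, map_pow, map_add, map_one,
      Polynomial.aeval_X, Polynomial.aeval_C]
    push_cast
    ring
  rw [hGG]
  -- final analytic identity
  have hab : a * b = (xv + 1) + (-(a*v)) := by rw [hbv]; linear_combination he
  have hcd2 : c * d = (xv + 1) + (-(d*v)) := by rw [hcv]; linear_combination he
  have hA : a^(m+3) * b^(m+1) = a^2 * (a*b)^(m+1) := by ring
  have hB : c^(m+1) * d^(m+3) = d^2 * (c*d)^(m+1) := by ring
  rw [hA, hB, hab, hcd2, add_pow, add_pow]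
  rw [Finset.mul_sum, Finset.mul_sum, mul_add, Finset.mul_sum, Finset.mul_sum,
    ← Finset.sum_add_distrib]
  refine Finset.sum_congr rfl (fun j hj => ?_)
  have hj' : j < m + 2 := mem_range.mp hj
  obtain ⟨i, hi1, hi2⟩ : ∃ i, m + 1 - j = i ∧ m + 3 - j = i + 2 := ⟨m + 1 - j, rfl, by omega⟩
  rw [hi1, hi2, neg_pow, neg_pow]
  push_cast
  ring
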